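/- Let n ≥ 2, let M ⊆ F_n contain at most c·ℓ^p macros of each G-length ℓ ≥ 2 (c > 0, p ≥ 0 constants), and let d ≥ 3 be an integer. Then for every integer s ≥ 1, the number of words of exact G-length d·s that admit a G'-representation using at most s generators satisfies |{ w ∈ S_{ds} : |w|_{G'} ≤ s }| ≤ (2e(n + c)d^{p+1})^s. -/

import Mathlib

open scoped ENNReal

/-- The single-letter generating set `G` of the free monoid `F_n` on `n` letters,
realized as lists over `Fin n`. -/
def letters (n : ℕ) : Set (List (Fin n)) := {w | ∃ i : Fin n, w = [i]}

/-- The length of `w ∈ F_n` with respect to a generating set `S`: the minimum number `k`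
such that `w` is a concatenation of `k` elements of `S`; `⊤` if `w` is not representable. -/
noncomputable def flen {n : ℕ} (S : Set (List (Fin n))) (w : List (Fin n)) : ℕ∞ :=
  sInf {k : ℕ∞ | ∃ L : List (List (Fin n)),
    (∀ x ∈ L, x ∈ S) ∧ L.flatten = w ∧ (L.length : ℕ∞) = k}

/-- The expansion function `f_{G'}(s) = sup { r ∈ ℕ : B_G(r) ⊆ B_{G'}(s) }` of the free
monoid, valued in `ℝ≥0∞` (so `⊤` means the inclusion holds for every radius). -/
noncomputable def fexpansion {n : ℕ} (S : Set (List (Fin n))) (s : ℕ) : ℝ≥0∞ :=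
  sSup {x : ℝ≥0∞ | ∃ r : ℕ, x = (r : ℝ≥0∞) ∧
    ∀ w : List (Fin n), w.length ≤ r → flen S w ≤ (s : ℕ∞)}


section Aux


lemma aux_pow_le_exp_factorial : ∀ s : ℕ, (s:ℝ)^s ≤ Real.exp 1 ^ s * s.factorial := by
  intro s
  induction s with
  | zero => simp
  | succ s ih =>
    have hs0 : (0:ℝ) ≤ s := Nat.cast_nonneg s
    have key : ((s:ℝ)+1)^s ≤ Real.exp 1 * (s:ℝ)^s := by
      rcases Nat.eq_zero_or_pos s with rfl | hs
      · simpa using (by norm_num [Real.one_le_exp_iff] : (1:ℝ) ≤ Real.exp 1)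
      · have hsp : (0:ℝ) < s := by exact_mod_cast hs
        have h1 : (s:ℝ) + 1 ≤ (s:ℝ) * Real.exp (1/(s:ℝ)) := by
          have := Real.add_one_le_exp (1/(s:ℝ))
          calc (s:ℝ) + 1 = (s:ℝ) * (1/(s:ℝ) + 1) := by field_simp; ring
          _ ≤ (s:ℝ) * Real.exp (1/(s:ℝ)) := mul_le_mul_of_nonneg_left this hs0
        calc ((s:ℝ)+1)^s ≤ ((s:ℝ) * Real.exp (1/(s:ℝ)))^s :=
              pow_le_pow_left₀ (by positivity) h1 s
          _ = (s:ℝ)^s * Real.exp (1/(s:ℝ))^s := mul_pow _ _ s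
          _ = (s:ℝ)^s * Real.exp 1 := by
              rw [← Real.exp_nat_mul]; congr 1; field_simp
          _ = Real.exp 1 * (s:ℝ)^s := mul_comm _ _
    have : ((s+1:ℕ):ℝ)^(s+1) = ((s:ℝ)+1)^s * ((s:ℝ)+1) := by push_cast; ring
    rw [this]
    calc ((s:ℝ)+1)^s * ((s:ℝ)+1)
        ≤ (Real.exp 1 * (s:ℝ)^s) * ((s:ℝ)+1) :=
          mul_le_mul_of_nonneg_right key (by positivity)
      _ ≤ (Real.exp 1 * (Real.exp 1 ^ s * s.factorial)) * ((s:ℝ)+1) := by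
          have := mul_le_mul_of_nonneg_left ih (Real.exp_pos 1).le
          exact mul_le_mul_of_nonneg_right this (by positivity)
      _ = Real.exp 1 ^ (s+1) * ((s.factorial : ℝ) * ((s:ℝ)+1)) := by ring
      _ = Real.exp 1 ^ (s+1) * ((s+1).factorial : ℝ) := by
          rw [Nat.factorial_succ]; push_cast; ring

lemma aux_choose_le (m s : ℕ) (hs : 1 ≤ s) :
    (((m*s).choose s : ℕ) : ℝ) ≤ (Real.exp 1 * m)^s := by
  have hdesc : ((m*s).choose s : ℝ) * s.factorial ≤ ((m*s:ℕ):ℝ)^s := by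
    have h1 : (m*s).descFactorial s ≤ (m*s)^s := Nat.descFactorial_le_pow _ _
    have h2 : (m*s).descFactorial s = s.factorial * (m*s).choose s :=
      Nat.descFactorial_eq_factorial_mul_choose _ _
    rw [h2] at h1
    have h3 : ((s.factorial * (m*s).choose s : ℕ):ℝ) ≤ (((m*s)^s : ℕ):ℝ) := by exact_mod_cast h1
    push_cast at h3 ⊢
    linarith
  have hss : (0:ℝ) < (s:ℝ)^s := by positivity
  rw [← mul_le_mul_iff_of_pos_right hss]
  calc ((m*s).choose s : ℝ) * (s:ℝ)^s
      ≤ ((m*s).choose s : ℝ) * (Real.exp 1 ^ s * s.factorial) := by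
        exact mul_le_mul_of_nonneg_left (aux_pow_le_exp_factorial s) (Nat.cast_nonneg _)
    _ = Real.exp 1 ^ s * (((m*s).choose s : ℝ) * s.factorial) := by ring
    _ ≤ Real.exp 1 ^ s * ((m*s:ℕ):ℝ)^s := by
        exact mul_le_mul_of_nonneg_left hdesc (by positivity)
    _ = (Real.exp 1 * m)^s * (s:ℝ)^s := by push_cast; rw [← mul_pow, ← mul_pow]; ring_nf


open Finset

lemma aux_card_fixed_sum (s m : ℕ) (hs : 1 ≤ s)
    (Λ : Finset (Fin s → ℕ)) (hΛ : ∀ f ∈ Λ, ∑ i, f i = m) :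
    Λ.card ≤ (m + s).choose s := by
  classical
  set g : (Fin s → ℕ) → (Fin s → ℕ) :=
    fun f i => (i : ℕ) + ∑ j ∈ univ.filter (fun j : Fin s => j ≤ i), f j with hg
  have hlt : ∀ f ∈ Λ, ∀ i : Fin s, g f i < m + s := by
    intro f hf i
    have h1 : ∑ j ∈ univ.filter (fun j : Fin s => j ≤ i), f j ≤ ∑ j, f j :=
      Finset.sum_le_sum_of_subset (filter_subset _ _)
    rw [hΛ f hf] at h1
    have h2 : (i:ℕ) < s := i.isLt
    simp only [hg]
    omega
  set G : (Fin s → ℕ) → (Fin s → Fin (m + s)) :=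
    fun f i => if hf : f ∈ Λ then ⟨g f i, hlt f hf i⟩ else ⟨0, by omega⟩ with hG
  have hmono : ∀ f ∈ Λ, StrictMono (G f) := by
    intro f hf i k hik
    have hsub : (univ.filter (fun j : Fin s => j ≤ i)) ⊆ (univ.filter (fun j : Fin s => j ≤ k)) := by
      intro j hj
      simp only [mem_filter, mem_univ, true_and] at hj ⊢
      exact hj.trans hik.le
    have : g f i < g f k := by
      have := Finset.sum_le_sum_of_subset (f := f) hsub
      simp only [hg]
      have : (i:ℕ) < (k:ℕ) := hik
      omega
    simpa only [hG, dif_pos hf, Fin.mk_lt_mk] using this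
  -- the map to cut sets
  set C : (Fin s → ℕ) → Finset (Fin (m + s)) := fun f => image (G f) univ with hC
  have hcard : ∀ f ∈ Λ, (C f).card = s := by
    intro f hf
    rw [hC]
    rw [card_image_of_injective _ (hmono f hf).injective, card_univ, Fintype.card_fin]
  have hCQ : ∀ f ∈ Λ, C f ∈ powersetCard s (univ : Finset (Fin (m+s))) := by
    intro f hf
    rw [mem_powersetCard]
    exact ⟨subset_univ _, hcard f hf⟩
  have hinj : Set.InjOn C Λ := by
    intro f hf0 f' hf0' heq
    have hf : f ∈ Λ := hf0
    have hf' : f' ∈ Λ := hf0'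
    -- G f = G f'
    have hGeq : G f = G f' := by
      have e1 : G f = (C f').orderEmbOfFin (hcard f' hf') :=
        Finset.orderEmbOfFin_unique (hcard f' hf')
          (fun x => heq ▸ mem_image_of_mem _ (mem_univ x)) (hmono f hf)
      have e2 : G f' = (C f').orderEmbOfFin (hcard f' hf') :=
        Finset.orderEmbOfFin_unique (hcard f' hf') (fun x => mem_image_of_mem _ (mem_univ x)) (hmono f' hf')
      rw [e1, e2]
    -- extract partial sums equality
    have hps : ∀ i : Fin s, ∑ j ∈ univ.filter (fun j : Fin s => j ≤ i), f j
        = ∑ j ∈ univ.filter (fun j : Fin s => j ≤ i), f' j := by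
      intro i
      have := congrFun hGeq i
      simp only [hG, dif_pos hf, dif_pos hf', Fin.mk.injEq, hg] at this
      omega
    -- strong induction on i.val
    have key : ∀ N : ℕ, ∀ i : Fin s, (i:ℕ) = N → f i = f' i := by
      intro N
      induction N using Nat.strong_induction_on with
      | _ N ihN =>
      intro i hiN
      have ih : ∀ j : Fin s, j < i → f j = f' j := fun j hj =>
        ihN (j:ℕ) (hiN ▸ (show ((j:ℕ) < (i:ℕ)) from hj)) j rfl
      have hsplit : ∀ (h : Fin s → ℕ), ∑ j ∈ univ.filter (fun j : Fin s => j ≤ i), h j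
          = h i + ∑ j ∈ univ.filter (fun j : Fin s => j < i), h j := by
        intro h
        have : univ.filter (fun j : Fin s => j ≤ i)
            = insert i (univ.filter (fun j : Fin s => j < i)) := by
          ext j
          simp only [mem_filter, mem_univ, true_and, mem_insert]
          constructor
          · intro hj; rcases eq_or_lt_of_le hj with h' | h'
            · exact Or.inl h'
            · exact Or.inr h'
          · rintro (rfl | hj); · exact le_refl _
            · exact hj.le
        rw [this, sum_insert (by simp)]
      have hlts : ∑ j ∈ univ.filter (fun j : Fin s => j < i), f j
          = ∑ j ∈ univ.filter (fun j : Fin s => j < i), f' j := by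
        apply Finset.sum_congr rfl
        intro j hj
        simp only [mem_filter, mem_univ, true_and] at hj
        exact ih j hj
      have := hps i
      rw [hsplit f, hsplit f', hlts] at this
      omega
    funext i
    exact key (i:ℕ) i rfl
  calc Λ.card ≤ (powersetCard s (univ : Finset (Fin (m+s)))).card :=
        Finset.card_le_card_of_injOn C hCQ hinj
    _ = (m+s).choose s := by rw [card_powersetCard, card_univ, Fintype.card_fin]


lemma aux_ofFn_getD {α : Type*} (l : List α) (dflt : α) (s : ℕ) (h : l.length ≤ s) :
    List.ofFn (fun i : Fin s => l.getD i dflt) = l ++ List.replicate (s - l.length) dflt := by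
  apply List.ext_getElem
  · simp; omega
  · intro i hi hi'
    simp only [List.getElem_ofFn]
    by_cases hc : i < l.length
    · rw [List.getElem_append_left hc, List.getD_eq_getElem l dflt hc]
    · push_neg at hc
      rw [List.getElem_append_right hc, List.getElem_replicate,
        List.getD_eq_default l dflt hc]

lemma aux_flatten_replicate_nil {α : Type*} (k : ℕ) :
    (List.replicate k ([] : List α)).flatten = [] := by
  induction k with
  | zero => rfl
  | succ k ih => simp [List.replicate_succ, ih]

def allW (n ℓ : ℕ) : Finset (List (Fin n)) :=
  Finset.image List.ofFn (Finset.univ : Finset (Fin ℓ → Fin n))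

lemma mem_allW {n ℓ : ℕ} {x : List (Fin n)} : x ∈ allW n ℓ ↔ x.length = ℓ := by
  constructor
  · intro hx
    obtain ⟨f, _, rfl⟩ := Finset.mem_image.1 hx
    simp
  · rintro rfl
    refine Finset.mem_image.2 ⟨fun i => x.get i, Finset.mem_univ _, ?_⟩
    exact List.ofFn_get x

lemma card_allW_one {n : ℕ} : (allW n 1).card ≤ n := by
  calc (allW n 1).card ≤ (Finset.univ : Finset (Fin 1 → Fin n)).card := Finset.card_image_le
    _ = n := by simp

noncomputable def GFin (n : ℕ) (M : Set (List (Fin n))) (ℓ : ℕ) : Finset (List (Fin n)) :=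
  @Finset.filter _ (fun x => x ∈ letters n ∪ M ∨ x = []) (Classical.decPred _) (allW n ℓ)

lemma mem_GFin {n ℓ : ℕ} {M : Set (List (Fin n))} {x : List (Fin n)} :
    x ∈ GFin n M ℓ ↔ x.length = ℓ ∧ (x ∈ letters n ∪ M ∨ x = []) := by
  unfold GFin
  rw [@Finset.mem_filter _ _ (Classical.decPred _), mem_allW]

lemma card_GFin {n : ℕ} (hn : 2 ≤ n) {c p : ℝ} (hc : 0 < c) (hp : 0 ≤ p)
    {M : Set (List (Fin n))}
    (hM : ∀ ℓ : ℕ, 2 ≤ ℓ → (({m ∈ M | m.length = ℓ}).ncard : ℝ) ≤ c * (ℓ : ℝ) ^ p)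
    {d : ℕ} (hd : 3 ≤ d) (ℓ : ℕ) :
    ((GFin n M ℓ).card : ℝ)
      ≤ ((n:ℝ) + c) * Real.exp (Real.log d - 1 + (ℓ:ℝ)/d) ^ p := by
  have hd0 : (0:ℝ) < d := by positivity
  have hlog : (1:ℝ) ≤ Real.log d := by
    rw [Real.le_log_iff_exp_le hd0]
    calc Real.exp 1 ≤ 2.7182818286 := Real.exp_one_lt_d9.le
      _ ≤ 3 := by norm_num
      _ ≤ (d:ℝ) := by exact_mod_cast hd
  have hE1 : (1:ℝ) ≤ Real.exp (Real.log d - 1 + (ℓ:ℝ)/d) := by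
    rw [Real.one_le_exp_iff]
    have : (0:ℝ) ≤ (ℓ:ℝ)/d := by positivity
    linarith
  have hEp1 : (1:ℝ) ≤ Real.exp (Real.log d - 1 + (ℓ:ℝ)/d) ^ p :=
    Real.one_le_rpow hE1 hp
  have hEp0 : (0:ℝ) ≤ Real.exp (Real.log d - 1 + (ℓ:ℝ)/d) ^ p := by linarith
  have hnc2 : (2:ℝ) ≤ (n:ℝ) + c := by
    have : (2:ℝ) ≤ (n:ℝ) := by exact_mod_cast hn
    linarith
  match ℓ, (by omega : ℓ = 0 ∨ ℓ = 1 ∨ 2 ≤ ℓ) with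
  | _, Or.inl rfl =>
    have hcard : (GFin n M 0).card ≤ 1 := by
      calc (GFin n M 0).card ≤ (allW n 0).card :=
            Finset.card_le_card (@Finset.filter_subset _ _ (Classical.decPred _) _)
        _ ≤ (Finset.univ : Finset (Fin 0 → Fin n)).card := Finset.card_image_le
        _ = 1 := by simp
    calc ((GFin n M 0).card : ℝ) ≤ 1 := by exact_mod_cast hcard
      _ ≤ ((n:ℝ)+c) * 1 := by linarith
      _ ≤ ((n:ℝ)+c) * Real.exp (Real.log d - 1 + ((0:ℕ):ℝ)/d) ^ p := by
          apply mul_le_mul_of_nonneg_left _ (by linarith)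
          exact hEp1
  | _, Or.inr (Or.inl rfl) =>
    have hcard : (GFin n M 1).card ≤ n := by
      calc (GFin n M 1).card ≤ (allW n 1).card :=
            Finset.card_le_card (@Finset.filter_subset _ _ (Classical.decPred _) _)
        _ ≤ (Finset.univ : Finset (Fin 1 → Fin n)).card := Finset.card_image_le
        _ = n := by simp
    calc ((GFin n M 1).card : ℝ) ≤ (n:ℝ) := by exact_mod_cast hcard
      _ ≤ ((n:ℝ)+c) * 1 := by linarith
      _ ≤ _ := by
          apply mul_le_mul_of_nonneg_left _ (by linarith)
          exact hEp1
  | ℓ, Or.inr (Or.inr hℓ2) =>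
    -- GFin ⊆ the macro set of length ℓ
    have hsub : ↑(GFin n M ℓ) ⊆ {m ∈ M | m.length = ℓ} := by
      intro x hx
      rw [Finset.mem_coe, mem_GFin] at hx
      obtain ⟨hlen, hmem | rfl⟩ := hx
      · rcases hmem with hlet | hmm
        · obtain ⟨i, rfl⟩ := hlet
          simp at hlen; omega
        · exact ⟨hmm, hlen⟩
      · simp at hlen; omega
    have hfin : ({m ∈ M | m.length = ℓ}).Finite := by
      apply (allW n ℓ).finite_toSet.subset
      intro x hx
      exact Finset.mem_coe.2 (mem_allW.2 hx.2)
    have h1 : ((GFin n M ℓ).card : ℝ) ≤ (({m ∈ M | m.length = ℓ}).ncard : ℝ) := by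
      have := Set.ncard_le_ncard hsub hfin
      rw [Set.ncard_coe_finset] at this
      exact_mod_cast this
    have hℓd : (ℓ:ℝ) ≤ Real.exp (Real.log d - 1 + (ℓ:ℝ)/d) := by
      have hℓ0 : (0:ℝ) < ℓ := by positivity
      have := Real.log_le_sub_one_of_pos (show (0:ℝ) < (ℓ:ℝ)/d by positivity)
      rw [Real.log_div (ne_of_gt hℓ0) (ne_of_gt hd0)] at this
      calc (ℓ:ℝ) = Real.exp (Real.log ℓ) := (Real.exp_log hℓ0).symm
        _ ≤ _ := Real.exp_le_exp.2 (by linarith)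
    calc ((GFin n M ℓ).card : ℝ) ≤ c * (ℓ:ℝ)^p := h1.trans (hM ℓ hℓ2)
      _ ≤ c * Real.exp (Real.log d - 1 + (ℓ:ℝ)/d) ^ p := by
          apply mul_le_mul_of_nonneg_left _ hc.le
          exact Real.rpow_le_rpow (Nat.cast_nonneg _) hℓd hp
      _ ≤ _ := by
          apply mul_le_mul_of_nonneg_right _ hEp0
          have : (0:ℝ) ≤ n := Nat.cast_nonneg n
          linarith

lemma prod_card_GFin_le {n : ℕ} (hn : 2 ≤ n) {c p : ℝ} (hc : 0 < c) (hp : 0 ≤ p)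
    {M : Set (List (Fin n))}
    (hM : ∀ ℓ : ℕ, 2 ≤ ℓ → (({m ∈ M | m.length = ℓ}).ncard : ℝ) ≤ c * (ℓ : ℝ) ^ p)
    {d : ℕ} (hd : 3 ≤ d) (s : ℕ) (lam : Fin s → ℕ) (hsum : ∑ i, lam i = d*s) :
    (∏ i, ((GFin n M (lam i)).card : ℝ)) ≤ (((n:ℝ) + c) * (d:ℝ)^p)^s := by
  have hd0 : (0:ℝ) < d := by positivity
  have hexp_eq : ∀ ℓ : ℕ, Real.exp (Real.log d - 1 + (ℓ:ℝ)/d) ^ p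
      = Real.exp ((Real.log d - 1 + (ℓ:ℝ)/d) * p) := fun ℓ => by
    rw [Real.rpow_def_of_pos (Real.exp_pos _), Real.log_exp]
  calc (∏ i, ((GFin n M (lam i)).card : ℝ))
      ≤ ∏ i, (((n:ℝ) + c) * Real.exp (Real.log d - 1 + (lam i:ℝ)/d) ^ p) :=
        Finset.prod_le_prod (fun i _ => Nat.cast_nonneg _)
          (fun i _ => card_GFin hn hc hp hM hd (lam i))
    _ = ((n:ℝ)+c)^s * ∏ i, Real.exp ((Real.log d - 1 + (lam i:ℝ)/d) * p) := by
        rw [Finset.prod_mul_distrib, Finset.prod_const, Finset.card_univ, Fintype.card_fin]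
        congr 1
        exact Finset.prod_congr rfl (fun i _ => hexp_eq (lam i))
    _ = ((n:ℝ)+c)^s * Real.exp (∑ i, (Real.log d - 1 + (lam i:ℝ)/d) * p) := by
        rw [Real.exp_sum]
    _ = ((n:ℝ)+c)^s * Real.exp ((s:ℕ) * (Real.log d * p)) := by
        have hcast : ∑ i : Fin s, ((lam i : ℝ)) = ((d*s : ℕ) : ℝ) := by
          rw [← Nat.cast_sum, hsum]
        have h2 : ((d*s:ℕ):ℝ)/d = (s:ℝ) := by
          push_cast
          field_simp
        congr 1
        rw [← Finset.sum_mul, Finset.sum_add_distrib, Finset.sum_const, Finset.card_univ,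
          Fintype.card_fin, ← Finset.sum_div, hcast, h2, nsmul_eq_mul]
        ring
    _ = ((n:ℝ)+c)^s * Real.exp (Real.log d * p) ^ (s:ℕ) := by
        rw [Real.exp_nat_mul]
    _ = ((n:ℝ)+c)^s * ((d:ℝ)^p) ^ s := by
        rw [Real.rpow_def_of_pos hd0]
    _ = (((n:ℝ)+c) * (d:ℝ)^p)^s := (mul_pow _ _ _).symm

lemma flatten_filter_ne {α : Type*} (l : List (List α)) :
    (l.filter fun x => !x.isEmpty).flatten = l.flatten := by
  induction l with
  | nil => rfl
  | cons a l ih => by_cases h : a.isEmpty <;> simp_all [List.filter_cons, List.isEmpty_iff]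

lemma exists_repr {n : ℕ} (S : Set (List (Fin n))) (s : ℕ) {w : List (Fin n)}
    (hw : flen S w ≤ (s : ℕ∞)) :
    ∃ L : List (List (Fin n)),
      (∀ x ∈ L, x ∈ S ∧ x ≠ []) ∧ L.flatten = w ∧ L.length ≤ s := by
  set Sw := {k : ℕ∞ | ∃ L : List (List (Fin n)),
    (∀ x ∈ L, x ∈ S) ∧ L.flatten = w ∧ (L.length : ℕ∞) = k} with hSw
  have hne : Sw.Nonempty := by
    by_contra h
    rw [Set.not_nonempty_iff_eq_empty] at h
    rw [flen, ← hSw, h, sInf_empty] at hw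
    exact (lt_irrefl _ ((ENat.coe_lt_top s).trans_le hw)).elim
  obtain ⟨m, hmS, hmin⟩ := (wellFounded_lt (α := ℕ∞)).has_min Sw hne
  have hms : m ≤ (s : ℕ∞) := le_trans (le_sInf fun b hb => not_lt.1 (hmin b hb)) hw
  obtain ⟨L, hLS, hLf, hLl⟩ := hmS
  have hlen : L.length ≤ s := by
    rw [← hLl] at hms
    exact_mod_cast hms
  refine ⟨L.filter (fun x => !x.isEmpty), ?_, ?_, ?_⟩
  · intro x hx
    rw [List.mem_filter] at hx
    refine ⟨hLS x hx.1, ?_⟩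
    have := hx.2
    simpa [List.isEmpty_iff] using this
  · rw [flatten_filter_ne, hLf]
  · exact le_trans (List.length_filter_le _ _) hlen

end Aux

/-- **Counting compressible words in the free monoid.**
Let `n ≥ 2`, let `M ⊆ F_n` contain at most `c·ℓ^p` macros of each `G`-length `ℓ ≥ 2`
(`c > 0`, `p ≥ 0`), and let `d ≥ 3`. Then for every `s ≥ 1`, the number of words of exact
length `d·s` admitting a `G'`-representation with at most `s` generators is at most
`(2e(n + c)d^{p+1})^s`. -/
theorem free_counting_compressible_words
    (n : ℕ) (hn : 2 ≤ n) (c p : ℝ) (hc : 0 < c) (hp : 0 ≤ p)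
    (M : Set (List (Fin n)))
    (hM : ∀ ℓ : ℕ, 2 ≤ ℓ → (({m ∈ M | m.length = ℓ}).ncard : ℝ) ≤ c * (ℓ : ℝ) ^ p)
    (d : ℕ) (hd : 3 ≤ d) (s : ℕ) (hs : 1 ≤ s) :
    (({w : List (Fin n) | w.length = d * s ∧
        flen (letters n ∪ M) w ≤ (s : ℕ∞)}).ncard : ℝ)
      ≤ (2 * Real.exp 1 * ((n : ℝ) + c) * (d : ℝ) ^ (p + 1)) ^ s := by
  classical
  have hd0 : (0:ℝ) < d := by positivity
  set T : Finset (Fin s → List (Fin n)) :=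
    (Fintype.piFinset fun _ : Fin s => (Finset.range (d*s+1)).biUnion (GFin n M)).filter
      (fun F => ∑ i, (F i).length = d*s) with hT
  set Lam : Finset (Fin s → ℕ) :=
    (Fintype.piFinset fun _ : Fin s => Finset.range (d*s+1)).filter
      (fun f => ∑ i, f i = d*s) with hLam
  -- Step A : every compressible word is the flatten of some element of T
  have hA : {w : List (Fin n) | w.length = d * s ∧ flen (letters n ∪ M) w ≤ (s:ℕ∞)}
      ⊆ ↑(T.image fun F => (List.ofFn F).flatten) := by
    intro w hw
    obtain ⟨hwlen, hwf⟩ := hw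
    obtain ⟨L, hLmem, hLf, hLl⟩ := exists_repr _ s hwf
    set F : Fin s → List (Fin n) := fun i => L.getD i [] with hF
    have hofFn : List.ofFn F = L ++ List.replicate (s - L.length) [] := aux_ofFn_getD L [] s hLl
    have hflat : (List.ofFn F).flatten = w := by
      rw [hofFn, List.flatten_append, aux_flatten_replicate_nil, List.append_nil, hLf]
    have hsummap : ∑ i, (F i).length = d * s := by
      calc ∑ i, (F i).length = (List.ofFn (List.length ∘ F)).sum := List.sum_ofFn.symm
        _ = ((List.ofFn F).map List.length).sum := by rw [List.map_ofFn]
        _ = (List.ofFn F).flatten.length := List.length_flatten.symm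
        _ = d * s := by rw [hflat, hwlen]
    have hFi : ∀ i : Fin s, F i ∈ (Finset.range (d*s+1)).biUnion (GFin n M) := by
      intro i
      by_cases h : (i:ℕ) < L.length
      · have hgetd : L.getD i [] = L[(i:ℕ)] := List.getD_eq_getElem L [] h
        have hmemL : F i ∈ L := by
          rw [hF]; simp only []; rw [hgetd]; exact List.getElem_mem h
        obtain ⟨hxS, hxne⟩ := hLmem _ hmemL
        have hlenle : (F i).length ≤ d*s := by
          have h1 : (F i).length ∈ L.map List.length := List.mem_map_of_mem hmemL
          have h2 := List.single_le_sum (fun x (_ : x ∈ L.map List.length) => Nat.zero_le x) _ h1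
          rw [← List.length_flatten, hLf, hwlen] at h2
          exact h2
        refine Finset.mem_biUnion.2 ⟨(F i).length, Finset.mem_range.2 (by omega), ?_⟩
        exact mem_GFin.2 ⟨rfl, Or.inl hxS⟩
      · have hnil : F i = [] := List.getD_eq_default _ _ (le_of_not_gt h)
        refine Finset.mem_biUnion.2 ⟨0, Finset.mem_range.2 (by omega), ?_⟩
        rw [hnil]
        exact mem_GFin.2 ⟨rfl, Or.inr rfl⟩
    have hFT : F ∈ T := by
      rw [hT, Finset.mem_filter]
      exact ⟨Fintype.mem_piFinset.2 hFi, hsummap⟩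
    exact Finset.mem_coe.2 (Finset.mem_image.2 ⟨F, hFT, hflat⟩)
  -- Step B : ncard ≤ T.card
  have hncard : (({w : List (Fin n) | w.length = d * s ∧
      flen (letters n ∪ M) w ≤ (s:ℕ∞)}).ncard : ℝ) ≤ (T.card : ℝ) := by
    have h1 := Set.ncard_le_ncard hA (T.image fun F => (List.ofFn F).flatten).finite_toSet
    rw [Set.ncard_coe_finset] at h1
    have h2 := Finset.card_image_le (s := T) (f := fun F => (List.ofFn F).flatten)
    exact_mod_cast le_trans h1 h2
  -- Step C : fiberwise counting
  have hmap : ∀ F ∈ T, (fun i => (F i).length) ∈ Lam := by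
    intro F hF
    rw [hT, Finset.mem_filter] at hF
    obtain ⟨hpi, hsum⟩ := hF
    rw [hLam, Finset.mem_filter]
    refine ⟨Fintype.mem_piFinset.2 fun i => ?_, hsum⟩
    obtain ⟨ℓ, hℓr, hℓm⟩ := Finset.mem_biUnion.1 (Fintype.mem_piFinset.1 hpi i)
    rw [Finset.mem_range] at hℓr ⊢
    rw [(mem_GFin.1 hℓm).1]
    exact hℓr
  have hTcard : T.card ≤ ∑ lam ∈ Lam, ∏ i, (GFin n M (lam i)).card := by
    rw [Finset.card_eq_sum_card_fiberwise hmap]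
    apply Finset.sum_le_sum
    intro lam _
    calc (T.filter (fun F => (fun i => (F i).length) = lam)).card
        ≤ (Fintype.piFinset fun i => GFin n M (lam i)).card := by
          apply Finset.card_le_card
          intro F hF
          rw [Finset.mem_filter] at hF
          obtain ⟨hFT, hFlam⟩ := hF
          rw [hT, Finset.mem_filter] at hFT
          refine Fintype.mem_piFinset.2 fun i => ?_
          obtain ⟨ℓ, hℓr, hℓm⟩ := Finset.mem_biUnion.1 (Fintype.mem_piFinset.1 hFT.1 i)
          have hlen : (F i).length = ℓ := (mem_GFin.1 hℓm).1
          have hli : (F i).length = lam i := congrFun hFlam i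
          rwa [← hlen, hli] at hℓm
      _ = ∏ i, (GFin n M (lam i)).card := Fintype.card_piFinset _
  -- Step E : number of length profiles
  have hLamcard : Lam.card ≤ ((d+1)*s).choose s := by
    have h1 : Lam.card ≤ (d*s + s).choose s := by
      apply aux_card_fixed_sum s (d*s) hs
      intro f hf
      rw [hLam, Finset.mem_filter] at hf
      exact hf.2
    have h2 : d*s + s = (d+1)*s := by ring
    rwa [h2] at h1
  -- base inequality
  have hbase : (Real.exp 1 * ((d:ℝ)+1)) * (((n:ℝ)+c) * (d:ℝ)^p)
      ≤ 2 * Real.exp 1 * ((n:ℝ)+c) * (d:ℝ)^(p+1) := by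
    have hpow : (d:ℝ)^(p+1) = (d:ℝ)^p * (d:ℝ) := by
      rw [Real.rpow_add_one (ne_of_gt hd0)]
    rw [hpow]
    have h1 : (d:ℝ)+1 ≤ 2*(d:ℝ) := by
      have : (1:ℝ) ≤ (d:ℝ) := by
        have : (3:ℝ) ≤ (d:ℝ) := by exact_mod_cast hd
        linarith
      linarith
    have h2 : (0:ℝ) ≤ Real.exp 1 * (((n:ℝ)+c) * (d:ℝ)^p) := by positivity
    calc (Real.exp 1 * ((d:ℝ)+1)) * (((n:ℝ)+c) * (d:ℝ)^p)
        = ((d:ℝ)+1) * (Real.exp 1 * (((n:ℝ)+c) * (d:ℝ)^p)) := by ring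
      _ ≤ (2*(d:ℝ)) * (Real.exp 1 * (((n:ℝ)+c) * (d:ℝ)^p)) :=
          mul_le_mul_of_nonneg_right h1 h2
      _ = 2 * Real.exp 1 * ((n:ℝ)+c) * ((d:ℝ)^p * (d:ℝ)) := by ring
  -- final chain
  calc (({w : List (Fin n) | w.length = d * s ∧
        flen (letters n ∪ M) w ≤ (s:ℕ∞)}).ncard : ℝ)
      ≤ (T.card : ℝ) := hncard
    _ ≤ ((∑ lam ∈ Lam, ∏ i, (GFin n M (lam i)).card : ℕ) : ℝ) := by exact_mod_cast hTcard
    _ = ∑ lam ∈ Lam, ∏ i, ((GFin n M (lam i)).card : ℝ) := by push_cast; rfl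
    _ ≤ ∑ lam ∈ Lam, (((n:ℝ)+c) * (d:ℝ)^p)^s := by
        apply Finset.sum_le_sum
        intro lam hlam
        have hsum : ∑ i, lam i = d*s := by
          rw [hLam, Finset.mem_filter] at hlam
          exact hlam.2
        exact prod_card_GFin_le hn hc hp hM hd s lam hsum
    _ = (Lam.card : ℝ) * (((n:ℝ)+c) * (d:ℝ)^p)^s := by
        rw [Finset.sum_const, nsmul_eq_mul]
    _ ≤ (Real.exp 1 * ((d:ℝ)+1))^s * (((n:ℝ)+c) * (d:ℝ)^p)^s := by
        apply mul_le_mul_of_nonneg_right _ (by positivity)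
        calc (Lam.card : ℝ) ≤ ((((d+1)*s).choose s : ℕ) : ℝ) := by exact_mod_cast hLamcard
          _ ≤ (Real.exp 1 * ((d+1 : ℕ):ℝ))^s := aux_choose_le (d+1) s hs
          _ = (Real.exp 1 * ((d:ℝ)+1))^s := by push_cast; ring
    _ = ((Real.exp 1 * ((d:ℝ)+1)) * (((n:ℝ)+c) * (d:ℝ)^p))^s := (mul_pow _ _ _).symm
    _ ≤ (2 * Real.exp 1 * ((n:ℝ) + c) * (d:ℝ)^(p+1))^s :=
        pow_le_pow_left₀ (by positivity) hbase s
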